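/- If G is the probability generating function of an integer-valued random variable S with P(S ≥ -D) = 1, P(S = -D) > 0, and E[S] < 0, then differentiating the identity G_ξ(s)(s^D G(s) - s^D) = (1-s) Σ_{j=0}^{D-1} F_∞(j) Σ_{x=j}^{D-1} f(x-D-j) s^x at s = 1 (with G_ξ(1) = 1) yields Σ_{j=0}^{D-1} F_∞(j) F(-j-1) = -E[S], where F(k) = P(S ≤ k) and f(k) = P(S = k). -/

import Mathlib

open MeasureTheory Filter Set
open scoped ENNReal

private lemma tendsto_tsum_squeeze (g : ℕ → ℝ → ℝ) (c : ℕ → ℝ) (L : ℝ) (hc : HasSum c L)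
    (h0 : ∀ k, ∀ s ∈ Set.Ioo (0:ℝ) 1, 0 ≤ g k s)
    (hub : ∀ k, ∀ s ∈ Set.Ioo (0:ℝ) 1, g k s ≤ c k)
    (hlim : ∀ k, Tendsto (g k) (nhdsWithin 1 (Set.Ioo (0:ℝ) 1)) (nhds (c k))) :
    Tendsto (fun s => ∑' k, g k s) (nhdsWithin 1 (Set.Ioo (0:ℝ) 1)) (nhds L) := by
  have hsummable : ∀ s ∈ Set.Ioo (0:ℝ) 1, Summable (fun k => g k s) := fun s hs =>
    Summable.of_nonneg_of_le (fun k => h0 k s hs) (fun k => hub k s hs) hc.summable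
  rw [tendsto_order]
  constructor
  · intro x hx
    obtain ⟨N, hN⟩ : ∃ N, x < ∑ k ∈ Finset.range N, c k :=
      ((hc.tendsto_sum_nat.eventually (eventually_gt_nhds hx)).exists)
    have hfin : Tendsto (fun s => ∑ k ∈ Finset.range N, g k s)
        (nhdsWithin 1 (Set.Ioo (0:ℝ) 1)) (nhds (∑ k ∈ Finset.range N, c k)) :=
      tendsto_finset_sum _ fun k _ => hlim k
    filter_upwards [hfin.eventually (eventually_gt_nhds hN), self_mem_nhdsWithin] with s hs hsmem
    exact hs.trans_le (Summable.sum_le_tsum _ (fun k _ => h0 k s hsmem) (hsummable s hsmem))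
  · intro b hb
    filter_upwards [self_mem_nhdsWithin] with s hsmem
    have h1 : ∑' k, g k s ≤ L := by
      rw [← hc.tsum_eq]
      exact Summable.tsum_le_tsum (fun k => hub k s hsmem) (hsummable s hsmem) hc.summable
    exact lt_of_le_of_lt h1 hb

private lemma aux_hasSum {Ω : Type*} [MeasurableSpace Ω] (μ : Measure Ω) [IsProbabilityMeasure μ]
    (S : Ω → ℤ) (hSmeas : Measurable S) (D : ℕ)
    (hlb : ∀ᵐ ω ∂μ, -(D : ℤ) ≤ S ω)
    (hint : Integrable (fun ω => (S ω : ℝ)) μ) :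
    HasSum (fun k : ℕ => (μ {ω | S ω = (k : ℤ) - D}).toReal) 1 ∧
    HasSum (fun k : ℕ => (k : ℝ) * (μ {ω | S ω = (k : ℤ) - D}).toReal)
      ((∫ ω, (S ω : ℝ) ∂μ) + D) := by
  set ν : Measure ℤ := μ.map S with hν
  have hνprob : IsProbabilityMeasure ν := Measure.isProbabilityMeasure_map hSmeas.aemeasurable
  have hνs : ∀ z : ℤ, ν {z} = μ {ω | S ω = z} := by
    intro z
    rw [hν, Measure.map_apply hSmeas (measurableSet_singleton z)]
    rfl
  have hnull : ∀ z : ℤ, z < -(D:ℤ) → ν {z} = 0 := by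
    intro z hz
    rw [hνs]
    refine measure_mono_null ?_ (ae_iff.1 hlb)
    intro ω h
    simp only [Set.mem_setOf_eq] at h ⊢
    omega
  set i : ℕ → ℤ := fun k => (k : ℤ) - D with hi
  have hinj : Function.Injective i := by intro a b h; simpa [hi] using h
  have hrange : ∀ z : ℤ, z ∉ Set.range i → z < -(D:ℤ) := by
    intro z hz
    by_contra h
    push_neg at h
    exact hz ⟨(z + D).toNat, by simp only [hi]; omega⟩
  constructor
  · have h1 : ∑' z : ℤ, ν {z} = 1 := by
      have h := (lintegral_countable' (μ := ν) (fun _ : ℤ => (1:ℝ≥0∞))).symm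
      simpa [lintegral_one, measure_univ] using h
    have h2 : HasSum (fun z : ℤ => (ν {z}).toReal) 1 := by
      have := ENNReal.hasSum_toReal (f := fun z : ℤ => ν {z}) (by rw [h1]; exact ENNReal.one_ne_top)
      rwa [← ENNReal.tsum_toReal_eq (fun z => measure_ne_top ν _), h1, ENNReal.toReal_one] at this
    have h3 := (Function.Injective.hasSum_iff hinj
        (fun z hz => by simp [hnull z (hrange z hz)])).2 h2
    refine h3.congr_fun fun k => ?_
    simp [Function.comp, hi, hνs]
  · have hintT : Integrable (fun ω => (S ω : ℝ) + D) μ := hint.add (integrable_const _)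
    have hTnn : 0 ≤ᵐ[μ] fun ω => (S ω : ℝ) + D := by
      filter_upwards [hlb] with ω h
      have h2 : (-(D:ℤ) : ℝ) ≤ (S ω : ℝ) := by exact_mod_cast h
      simp only [Pi.zero_apply]
      push_cast at h2
      linarith
    have hEint : ∫ ω, ((S ω : ℝ) + D) ∂μ
        = (∫⁻ ω, ENNReal.ofReal ((S ω : ℝ) + D) ∂μ).toReal :=
      integral_eq_lintegral_of_nonneg_ae hTnn hintT.aestronglyMeasurable
    have hmapl : ∫⁻ z : ℤ, ENNReal.ofReal ((z : ℝ) + D) ∂ν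
        = ∫⁻ ω, ENNReal.ofReal ((S ω : ℝ) + D) ∂μ := by
      rw [hν, lintegral_map (measurable_of_countable _) hSmeas]
    have hlt : ∫⁻ z : ℤ, ENNReal.ofReal ((z : ℝ) + D) ∂ν ≠ ∞ := by
      rw [hmapl]; exact hintT.lintegral_lt_top.ne
    have hcnt : ∫⁻ z : ℤ, ENNReal.ofReal ((z : ℝ) + D) ∂ν
        = ∑' z : ℤ, ENNReal.ofReal ((z : ℝ) + D) * ν {z} :=
      lintegral_countable' _
    have hsumZ : HasSum (fun z : ℤ => (ENNReal.ofReal ((z : ℝ) + D) * ν {z}).toReal)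
        (∫ ω, ((S ω : ℝ) + D) ∂μ) := by
      have h := ENNReal.hasSum_toReal
        (f := fun z : ℤ => ENNReal.ofReal ((z : ℝ) + D) * ν {z}) (by rw [← hcnt]; exact hlt)
      rwa [← ENNReal.tsum_toReal_eq
          (fun z => ENNReal.mul_ne_top ENNReal.ofReal_ne_top (measure_ne_top ν _)),
        ← hcnt, hmapl, ← hEint] at h
    have h3 := (Function.Injective.hasSum_iff hinj
        (fun z hz => by simp [hnull z (hrange z hz)])).2 hsumZ
    have h4 : HasSum (fun k : ℕ => (k : ℝ) * (μ {ω | S ω = (k : ℤ) - D}).toReal)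
        (∫ ω, ((S ω : ℝ) + D) ∂μ) := by
      refine h3.congr_fun fun k => ?_
      show (k : ℝ) * (μ {ω | S ω = (k : ℤ) - D}).toReal
        = (ENNReal.ofReal ((i k : ℝ) + D) * ν {i k}).toReal
      rw [ENNReal.toReal_mul,
        ENNReal.toReal_ofReal (by simp only [hi]; push_cast; linarith [Nat.cast_nonneg (α := ℝ) k])]
      rw [hνs]
      simp only [hi]
      push_cast
      ring
    have hEadd : ∫ ω, ((S ω : ℝ) + D) ∂μ = (∫ ω, (S ω : ℝ) ∂μ) + D := by
      rw [integral_add hint (integrable_const _), integral_const]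
      simp
    rwa [hEadd] at h4

private lemma aux_tail {Ω : Type*} [MeasurableSpace Ω] (μ : Measure Ω) [IsFiniteMeasure μ]
    (S : Ω → ℤ) (hSmeas : Measurable S) (D : ℕ)
    (hlb : ∀ᵐ ω ∂μ, -(D : ℤ) ≤ S ω) (j : ℕ) (hj : j < D) :
    (μ {ω | S ω ≤ -(j:ℤ) - 1}).toReal
      = ∑ x ∈ Finset.Icc j (D-1), (μ {ω | S ω = (x:ℤ) - D - j}).toReal := by
  have hdisj : (↑(Finset.Icc j (D-1)) : Set ℕ).PairwiseDisjoint
      (fun x => {ω | S ω = (x:ℤ) - D - j}) := by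
    intro x _ y _ hxy
    refine Set.disjoint_left.2 ?_
    intro ω hx hy
    simp only [Set.mem_setOf_eq] at hx hy
    exact hxy (by omega)
  have hU : μ (⋃ x ∈ Finset.Icc j (D-1), {ω | S ω = (x:ℤ) - D - j})
      = ∑ x ∈ Finset.Icc j (D-1), μ {ω | S ω = (x:ℤ) - D - j} :=
    measure_biUnion_finset hdisj (fun x _ => hSmeas (measurableSet_singleton _))
  have hsub : (⋃ x ∈ Finset.Icc j (D-1), {ω | S ω = (x:ℤ) - D - j})
      ⊆ {ω | S ω ≤ -(j:ℤ) - 1} := by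
    intro ω hω
    simp only [Set.mem_iUnion, Finset.mem_Icc, Set.mem_setOf_eq] at hω ⊢
    obtain ⟨x, ⟨hx1, hx2⟩, hx3⟩ := hω
    omega
  have hdiff : μ ({ω | S ω ≤ -(j:ℤ) - 1}
      \ ⋃ x ∈ Finset.Icc j (D-1), {ω | S ω = (x:ℤ) - D - j}) = 0 := by
    refine measure_mono_null ?_ (ae_iff.1 hlb)
    rintro ω ⟨h1, h2⟩
    simp only [Set.mem_setOf_eq] at h1 ⊢
    intro h3
    apply h2
    simp only [Set.mem_iUnion, Finset.mem_Icc, Set.mem_setOf_eq]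
    refine ⟨(S ω + D + j).toNat, ⟨by omega, by omega⟩, by omega⟩
  have hEq : μ {ω | S ω ≤ -(j:ℤ) - 1}
      = μ (⋃ x ∈ Finset.Icc j (D-1), {ω | S ω = (x:ℤ) - D - j}) := by
    refine le_antisymm ?_ (measure_mono hsub)
    calc μ {ω | S ω ≤ -(j:ℤ) - 1}
        = μ ((⋃ x ∈ Finset.Icc j (D-1), {ω | S ω = (x:ℤ) - D - j})
            ∪ ({ω | S ω ≤ -(j:ℤ) - 1}
              \ ⋃ x ∈ Finset.Icc j (D-1), {ω | S ω = (x:ℤ) - D - j})) := by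
          rw [Set.union_diff_cancel hsub]
      _ ≤ μ (⋃ x ∈ Finset.Icc j (D-1), {ω | S ω = (x:ℤ) - D - j})
            + μ ({ω | S ω ≤ -(j:ℤ) - 1}
              \ ⋃ x ∈ Finset.Icc j (D-1), {ω | S ω = (x:ℤ) - D - j}) := measure_union_le _ _
      _ = μ (⋃ x ∈ Finset.Icc j (D-1), {ω | S ω = (x:ℤ) - D - j}) := by rw [hdiff, add_zero]
  rw [hEq, hU, ENNReal.toReal_sum (fun x _ => measure_ne_top μ _)]

private lemma aux_main (a : ℕ → ℝ) (ha0 : ∀ k, 0 ≤ a k) (ha : HasSum a 1)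
    (ET : ℝ) (hka : HasSum (fun k : ℕ => (k:ℝ) * a k) ET)
    (p : ℕ → ℝ) (hp0 : ∀ k, 0 ≤ p k) (hpsum : HasSum p 1)
    (D : ℕ) (Q : ℝ → ℝ) (hQ : Continuous Q)
    (hident' : ∀ s ∈ Set.Ioo (0:ℝ) 1,
      (∑' j : ℕ, p j * s ^ j) * ((∑' k : ℕ, a k * s ^ k) - s ^ D) = (1 - s) * Q s) :
    Q 1 = (D : ℝ) - ET := by
  set l : Filter ℝ := nhdsWithin 1 (Set.Ioo (0:ℝ) 1) with hldef
  have hlne : l.NeBot := right_nhdsWithin_Ioo_neBot one_pos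
  have hH : Tendsto (fun s : ℝ => ∑' j : ℕ, p j * s ^ j) l (nhds 1) := by
    refine tendsto_tsum_squeeze _ p 1 hpsum ?_ ?_ ?_
    · intro k s hs; exact mul_nonneg (hp0 k) (pow_nonneg hs.1.le _)
    · intro k s hs
      calc p k * s ^ k ≤ p k * 1 :=
            mul_le_mul_of_nonneg_left (pow_le_one₀ hs.1.le hs.2.le) (hp0 k)
        _ = p k := mul_one _
    · intro k
      have h1 : Tendsto (fun s : ℝ => p k * s ^ k) (nhds 1) (nhds (p k * 1 ^ k)) :=
        (continuous_const.mul (continuous_pow k)).tendsto 1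
      simpa using h1.mono_left nhdsWithin_le_nhds
  have hG2 : Tendsto (fun s : ℝ => ∑' k : ℕ, a k * ∑ i ∈ Finset.range k, s ^ i) l
      (nhds ET) := by
    refine tendsto_tsum_squeeze _ (fun k => (k:ℝ) * a k) ET hka ?_ ?_ ?_
    · intro k s hs
      exact mul_nonneg (ha0 k) (Finset.sum_nonneg fun i _ => pow_nonneg hs.1.le _)
    · intro k s hs
      have hsum_le : ∑ i ∈ Finset.range k, s ^ i ≤ (k:ℝ) := by
        calc ∑ i ∈ Finset.range k, s ^ i ≤ ∑ _i ∈ Finset.range k, (1:ℝ) :=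
              Finset.sum_le_sum fun i _ => pow_le_one₀ hs.1.le hs.2.le
          _ = k := by simp
      calc a k * ∑ i ∈ Finset.range k, s ^ i ≤ a k * k :=
            mul_le_mul_of_nonneg_left hsum_le (ha0 k)
        _ = (k:ℝ) * a k := mul_comm _ _
    · intro k
      have h1 : Tendsto (fun s : ℝ => a k * ∑ i ∈ Finset.range k, s ^ i) (nhds 1)
          (nhds (a k * ∑ i ∈ Finset.range k, (1:ℝ) ^ i)) :=
        (continuous_const.mul (continuous_finset_sum _ fun i _ => continuous_pow i)).tendsto 1
      simp only [one_pow, Finset.sum_const, Finset.card_range, nsmul_eq_mul, mul_one] at h1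
      rw [mul_comm (a k) (k:ℝ)] at h1
      exact h1.mono_left nhdsWithin_le_nhds
  have hDlim : Tendsto (fun s : ℝ => ∑ i ∈ Finset.range D, s ^ i) l (nhds (D:ℝ)) := by
    have h1 : Tendsto (fun s : ℝ => ∑ i ∈ Finset.range D, s ^ i) (nhds 1)
        (nhds (∑ i ∈ Finset.range D, (1:ℝ) ^ i)) :=
      (continuous_finset_sum _ fun i _ => continuous_pow i).tendsto 1
    simp only [one_pow, Finset.sum_const, Finset.card_range, nsmul_eq_mul, mul_one] at h1
    exact h1.mono_left nhdsWithin_le_nhds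
  have hkey : ∀ s ∈ Set.Ioo (0:ℝ) 1,
      (∑' j : ℕ, p j * s ^ j) *
        ((∑ i ∈ Finset.range D, s ^ i) - ∑' k : ℕ, a k * ∑ i ∈ Finset.range k, s ^ i)
      = Q s := by
    intro s hs
    have h1s : (1:ℝ) - s ≠ 0 := sub_ne_zero.2 (ne_of_gt hs.2)
    have hsa : Summable (fun k => a k * s ^ k) := by
      refine Summable.of_nonneg_of_le
        (fun k => mul_nonneg (ha0 k) (pow_nonneg hs.1.le _)) (fun k => ?_) ha.summable
      calc a k * s ^ k ≤ a k * 1 :=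
            mul_le_mul_of_nonneg_left (pow_le_one₀ hs.1.le hs.2.le) (ha0 k)
        _ = a k := mul_one _
    have hsg : Summable (fun k => a k * ∑ i ∈ Finset.range k, s ^ i) := by
      refine Summable.of_nonneg_of_le
        (fun k => mul_nonneg (ha0 k) (Finset.sum_nonneg fun i _ => pow_nonneg hs.1.le _))
        (fun k => ?_) hka.summable
      have hsum_le : ∑ i ∈ Finset.range k, s ^ i ≤ (k:ℝ) := by
        calc ∑ i ∈ Finset.range k, s ^ i ≤ ∑ _i ∈ Finset.range k, (1:ℝ) :=
              Finset.sum_le_sum fun i _ => pow_le_one₀ hs.1.le hs.2.le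
          _ = k := by simp
      calc a k * ∑ i ∈ Finset.range k, s ^ i ≤ a k * k :=
            mul_le_mul_of_nonneg_left hsum_le (ha0 k)
        _ = (k:ℝ) * a k := mul_comm _ _
    have hstep : (1 - s) * ∑' k : ℕ, a k * ∑ i ∈ Finset.range k, s ^ i
        = 1 - ∑' k : ℕ, a k * s ^ k := by
      rw [← tsum_mul_left]
      have hterm : ∀ k : ℕ,
          (1 - s) * (a k * ∑ i ∈ Finset.range k, s ^ i) = a k - a k * s ^ k := by
        intro k
        have h := geom_sum_mul s k
        calc (1 - s) * (a k * ∑ i ∈ Finset.range k, s ^ i)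
            = a k * (-((∑ i ∈ Finset.range k, s ^ i) * (s - 1))) := by ring
          _ = a k * (1 - s ^ k) := by rw [h]; ring
          _ = a k - a k * s ^ k := by ring
      calc ∑' k : ℕ, (1 - s) * (a k * ∑ i ∈ Finset.range k, s ^ i)
          = ∑' k : ℕ, (a k - a k * s ^ k) := tsum_congr hterm
        _ = (∑' k : ℕ, a k) - ∑' k : ℕ, a k * s ^ k := Summable.tsum_sub ha.summable hsa
        _ = 1 - ∑' k : ℕ, a k * s ^ k := by rw [ha.tsum_eq]
    have hgeo : (1 - s) * ∑ i ∈ Finset.range D, s ^ i = 1 - s ^ D := by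
      have h := geom_sum_mul s D
      calc (1 - s) * ∑ i ∈ Finset.range D, s ^ i
          = -((∑ i ∈ Finset.range D, s ^ i) * (s - 1)) := by ring
        _ = 1 - s ^ D := by rw [h]; ring
    have e1 : (∑' k : ℕ, a k * s ^ k) - s ^ D
        = (1 - s) * ((∑ i ∈ Finset.range D, s ^ i)
            - ∑' k : ℕ, a k * ∑ i ∈ Finset.range k, s ^ i) := by
      linear_combination hstep - hgeo
    have hid := hident' s hs
    apply mul_left_cancel₀ h1s
    calc (1 - s) * ((∑' j : ℕ, p j * s ^ j) *
          ((∑ i ∈ Finset.range D, s ^ i) - ∑' k : ℕ, a k * ∑ i ∈ Finset.range k, s ^ i))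
        = (∑' j : ℕ, p j * s ^ j) * ((1 - s) * ((∑ i ∈ Finset.range D, s ^ i)
            - ∑' k : ℕ, a k * ∑ i ∈ Finset.range k, s ^ i)) := by ring
      _ = (∑' j : ℕ, p j * s ^ j) * ((∑' k : ℕ, a k * s ^ k) - s ^ D) := by rw [← e1]
      _ = (1 - s) * Q s := hid
  have hT : Tendsto Q l (nhds (1 * ((D:ℝ) - ET))) := by
    refine Tendsto.congr' ?_ (hH.mul (hDlim.sub hG2))
    filter_upwards [self_mem_nhdsWithin] with s hs using hkey s hs
  have hQt : Tendsto Q l (nhds (Q 1)) := (hQ.tendsto 1).mono_left nhdsWithin_le_nhds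
  have := tendsto_nhds_unique hQt hT
  simpa using this

theorem key_equation {Ω : Type*} [MeasurableSpace Ω] (μ : Measure Ω) [IsProbabilityMeasure μ]
    (S : Ω → ℤ) (hSmeas : Measurable S)
    (D : ℕ) (hD : 1 ≤ D)
    (hlb : ∀ᵐ ω ∂μ, -(D : ℤ) ≤ S ω)
    (hatom : 0 < μ {ω | S ω = -(D : ℤ)})
    (hint : Integrable (fun ω => (S ω : ℝ)) μ)
    (hmean : ∫ ω, (S ω : ℝ) ∂μ < 0)
    (p : ℕ → ℝ) (hp0 : ∀ k, 0 ≤ p k) (hpsum : HasSum p 1)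
    (c : ℕ → ℝ) (hc : ∀ j, 0 ≤ c j ∧ c j ≤ 1)
    (hident : ∀ s : ℝ, s ∈ Set.Ioo (0 : ℝ) 1 →
      (∑' j : ℕ, p j * s ^ j) *
          ((∑' k : ℕ, (μ {ω | S ω = (k : ℤ) - D}).toReal * s ^ k) - s ^ D) =
        (1 - s) * ∑ j ∈ Finset.range D, c j *
          ∑ x ∈ Finset.Icc j (D - 1),
            (μ {ω | S ω = (x : ℤ) - D - j}).toReal * s ^ x) :
    ∑ j ∈ Finset.range D, c j * (μ {ω | S ω ≤ -(j : ℤ) - 1}).toReal =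
      -∫ ω, (S ω : ℝ) ∂μ := by
  obtain ⟨ha, hka⟩ := aux_hasSum μ S hSmeas D hlb hint
  set Q : ℝ → ℝ := fun s => ∑ j ∈ Finset.range D, c j *
      ∑ x ∈ Finset.Icc j (D - 1), (μ {ω | S ω = (x : ℤ) - D - j}).toReal * s ^ x with hQdef
  have hQcont : Continuous Q := by
    apply continuous_finset_sum
    intro j _
    exact continuous_const.mul
      (continuous_finset_sum _ fun x _ => continuous_const.mul (continuous_pow x))
  have hmain : Q 1 = (D : ℝ) - ((∫ ω, (S ω : ℝ) ∂μ) + D) :=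
    aux_main (fun k => (μ {ω | S ω = (k : ℤ) - D}).toReal) (fun k => ENNReal.toReal_nonneg)
      ha _ hka p hp0 hpsum D Q hQcont (fun s hs => hident s hs)
  have hQ1 : Q 1 = ∑ j ∈ Finset.range D, c j *
      ∑ x ∈ Finset.Icc j (D - 1), (μ {ω | S ω = (x : ℤ) - D - j}).toReal := by
    simp [hQdef]
  calc ∑ j ∈ Finset.range D, c j * (μ {ω | S ω ≤ -(j : ℤ) - 1}).toReal
      = ∑ j ∈ Finset.range D, c j *
          ∑ x ∈ Finset.Icc j (D - 1), (μ {ω | S ω = (x : ℤ) - D - j}).toReal :=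
        Finset.sum_congr rfl fun j hj => by
          rw [aux_tail μ S hSmeas D hlb j (Finset.mem_range.1 hj)]
    _ = Q 1 := hQ1.symm
    _ = -∫ ω, (S ω : ℝ) ∂μ := by rw [hmain]; ring
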